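/- For q > 0 and λ ≥ 0, E[(B²/(λ²+B²))^q] = E(|B|^{2q}) · h_{-2q}(λ), where B is standard Gaussian, E(|B|^{2q}) = 2^q Γ(q+1/2)/Γ(1/2), and h_{-2q}(λ) = (1/Γ(2q)) ∫_0^∞ t^{2q-1} e^{-t²/2 - λt} dt. -/

import Mathlib

open Real MeasureTheory ProbabilityTheory Set
open scoped ENNReal NNReal

-- g below: the Glasser integrand
noncomputable def gl (b x : ℝ) : ℝ := Real.exp (-x^2/2 - b^2/(2*x^2))

lemma gl_nonneg (b x : ℝ) : 0 ≤ gl b x := Real.exp_nonneg _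

lemma gl_le (b x : ℝ) : gl b x ≤ Real.exp (-(1/2) * x^2) := by
  apply Real.exp_le_exp.2
  have h1 : 0 ≤ b^2/(2*x^2) := by positivity
  nlinarith

lemma gl_integrable (b : ℝ) : IntegrableOn (gl b) (Ioi 0) := by
  apply Integrable.mono' ((integrable_exp_neg_mul_sq (by norm_num : (0:ℝ) < 1/2)).restrict (s := Ioi 0))
  · exact ((Real.measurable_exp.comp ((measurable_id.pow_const 2).neg.div_const 2 |>.sub
      ((measurable_const.div ((measurable_id.pow_const 2).const_mul 2))))).aestronglyMeasurable)
  · filter_upwards with x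
    rw [Real.norm_eq_abs, abs_of_nonneg (gl_nonneg b x)]
    exact gl_le b x

-- image facts
lemma image_inv_map (b : ℝ) (hb : 0 < b) : (fun x : ℝ => b / x) '' (Ioi 0) = Ioi 0 := by
  ext y
  constructor
  · rintro ⟨x, hx, rfl⟩
    exact div_pos hb hx
  · intro hy
    exact ⟨b / y, div_pos hb hy, by field_simp⟩

lemma image_sub_map (b : ℝ) (hb : 0 < b) : (fun x : ℝ => x - b / x) '' (Ioi 0) = univ := by
  apply eq_univ_of_forall
  intro y
  have hs : 0 < Real.sqrt (y^2 + 4*b) := Real.sqrt_pos.2 (by positivity)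
  have hsy : |y| < Real.sqrt (y^2 + 4*b) := by
    have : |y| = Real.sqrt (y^2) := (Real.sqrt_sq_eq_abs y).symm
    rw [this]
    exact Real.sqrt_lt_sqrt (sq_nonneg y) (by linarith)
  have hx : 0 < (y + Real.sqrt (y^2 + 4*b)) / 2 := by
    have := neg_abs_le y
    linarith
  refine ⟨(y + Real.sqrt (y^2 + 4*b)) / 2, hx, ?_⟩
  have hsq : (Real.sqrt (y^2+4*b))^2 = y^2 + 4*b := Real.sq_sqrt (by positivity)
  have hne : y + Real.sqrt (y^2 + 4*b) ≠ 0 := by intro h; rw [h] at hx; norm_num at hx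
  field_simp
  nlinarith [hsq]


lemma inv_deriv (b : ℝ) {x : ℝ} (hx : x ∈ Ioi (0:ℝ)) :
    HasDerivWithinAt (fun x : ℝ => b / x) (-(b / x^2)) (Ioi 0) x := by
  have h0 := (hasDerivAt_inv (ne_of_gt (mem_Ioi.1 hx))).const_mul b
  have he : b * -(x^2)⁻¹ = -(b / x^2) := by ring
  rw [he] at h0
  have h1 : HasDerivAt (fun x : ℝ => b / x) (-(b / x^2)) x := by
    simpa only [div_eq_mul_inv] using h0
  exact h1.hasDerivWithinAt

lemma sub_deriv (b : ℝ) {x : ℝ} (hx : x ∈ Ioi (0:ℝ)) :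
    HasDerivWithinAt (fun x : ℝ => x - b / x) (1 + b / x^2) (Ioi 0) x := by
  have h0 := (hasDerivAt_id x).sub
    ((hasDerivAt_inv (ne_of_gt (mem_Ioi.1 hx))).const_mul b)
  have he : (1:ℝ) - b * -(x^2)⁻¹ = 1 + b / x^2 := by ring
  rw [he] at h0
  have h1 : HasDerivAt (fun x : ℝ => x - b / x) (1 + b / x^2) x := by
    simpa only [div_eq_mul_inv, id_eq, Pi.sub_def] using h0
  exact h1.hasDerivWithinAt

lemma binv_inj (b : ℝ) (hb : 0 < b) : InjOn (fun x : ℝ => b / x) (Ioi 0) := by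
  intro x hx y hy h
  simp only [mem_Ioi] at hx hy
  field_simp [ne_of_gt hb] at h
  exact h.symm

lemma sub_inj (b : ℝ) (hb : 0 < b) : InjOn (fun x : ℝ => x - b / x) (Ioi 0) := by
  intro x hx y hy h
  simp only [mem_Ioi] at hx hy
  simp only at h
  have hx' : x ≠ 0 := ne_of_gt hx
  have hy' : y ≠ 0 := ne_of_gt hy
  field_simp at h
  have h2 : (x - y) * (x*y + b) = 0 := by nlinarith [h]
  have h3 : 0 < x*y + b := by positivity
  have := mul_eq_zero.1 h2
  rcases this with h4 | h4
  · linarith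
  · linarith

lemma gl_comp_inv (b : ℝ) (hb : 0 < b) {x : ℝ} (hx : 0 < x) : gl b (b / x) = gl b x := by
  unfold gl
  congr 1
  field_simp
  ring

lemma int_eq (b : ℝ) (hb : 0 < b) :
    ∫ x in Ioi (0:ℝ), gl b x = ∫ x in Ioi (0:ℝ), (b / x^2) * gl b x := by
  conv_lhs => rw [← image_inv_map b hb]
  rw [integral_image_eq_integral_abs_deriv_smul measurableSet_Ioi (fun x hx => inv_deriv b hx)
    (binv_inj b hb)]
  apply setIntegral_congr_fun measurableSet_Ioi
  intro x hx
  simp only [mem_Ioi] at hx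
  simp only [smul_eq_mul]
  rw [gl_comp_inv b hb hx, abs_neg, abs_of_pos (by positivity)]

lemma int2_integrable (b : ℝ) (hb : 0 < b) :
    IntegrableOn (fun x => (b / x^2) * gl b x) (Ioi 0) := by
  have h := (integrableOn_image_iff_integrableOn_abs_deriv_smul measurableSet_Ioi
    (fun x hx => inv_deriv b hx) (binv_inj b hb) (gl b)).1
  rw [image_inv_map b hb] at h
  have h2 := h (gl_integrable b)
  apply h2.congr_fun _ measurableSet_Ioi
  intro x hx
  simp only [mem_Ioi] at hx
  simp only [smul_eq_mul]
  rw [gl_comp_inv b hb hx, abs_neg, abs_of_pos (by positivity)]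

lemma glasser (b : ℝ) (hb : 0 < b) :
    ∫ x in Ioi (0:ℝ), gl b x = Real.sqrt (2*π) / 2 * Real.exp (-b) := by
  have key : Real.sqrt (2*π)
      = ∫ x in Ioi (0:ℝ), |1 + b / x^2| * Real.exp (-(x - b/x)^2/2) := by
    have h := integral_image_eq_integral_abs_deriv_smul measurableSet_Ioi
      (fun x hx => sub_deriv b hx) (sub_inj b hb) (fun y => Real.exp (-y^2/2))
    rw [image_sub_map b hb, setIntegral_univ] at h
    simp only [smul_eq_mul] at h
    rw [← h]
    have : ∀ y : ℝ, Real.exp (-y^2/2) = Real.exp (-(1/2) * y^2) := by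
      intro y; congr 1; ring
    simp_rw [this]
    rw [integral_gaussian]
    congr 1
    ring
  have key2 : ∀ x ∈ Ioi (0:ℝ), |1 + b / x^2| * Real.exp (-(x - b/x)^2/2)
      = Real.exp b * (gl b x + (b / x^2) * gl b x) := by
    intro x hx
    simp only [mem_Ioi] at hx
    have hx' : x ≠ 0 := ne_of_gt hx
    have he : Real.exp (-(x - b/x)^2/2) = Real.exp b * gl b x := by
      unfold gl
      rw [← Real.exp_add]
      congr 1
      field_simp
      ring
    rw [he, abs_of_pos (by positivity)]
    ring
  rw [setIntegral_congr_fun measurableSet_Ioi key2, integral_const_mul,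
    integral_add (gl_integrable b) (int2_integrable b hb), ← int_eq b hb] at key
  rw [Real.exp_neg]
  have hexp : (0:ℝ) < Real.exp b := Real.exp_pos b
  rw [Real.sqrt_mul (by norm_num : (0:ℝ) ≤ 2) π] at key ⊢
  field_simp
  nlinarith [key]

lemma gamma_scaled (s a : ℝ) (hs : 0 < s) (ha : 0 < a) :
    ∫ u in Ioi (0:ℝ), u ^ (s-1) * Real.exp (-(a*u)) = Real.Gamma s / a ^ s := by
  have h := integral_comp_mul_left_Ioi (fun x => Real.exp (-x) * x ^ (s-1)) 0 ha
  rw [mul_zero] at h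
  rw [← Real.Gamma_eq_integral hs] at h
  have h2 : ∀ u ∈ Ioi (0:ℝ), Real.exp (-(a*u)) * (a*u) ^ (s-1)
      = a ^ (s-1) * (u ^ (s-1) * Real.exp (-(a*u))) := by
    intro u hu
    rw [Real.mul_rpow ha.le (le_of_lt hu)]
    ring
  rw [setIntegral_congr_fun measurableSet_Ioi h2, integral_const_mul] at h
  have ha1 : a ^ (s-1) ≠ 0 := by positivity
  have ha2 : a ^ (s-1) * a = a ^ s := by
    nth_rewrite 2 [← Real.rpow_one a]
    rw [← Real.rpow_add ha]
    norm_num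
  rw [smul_eq_mul] at h
  field_simp at h ⊢
  rw [← ha2]
  linarith [h]

lemma gamma_integrable (s a : ℝ) (hs : 0 < s) (ha : 0 < a) :
    IntegrableOn (fun u => u ^ (s-1) * Real.exp (-(a*u))) (Ioi (0:ℝ)) := by
  have h0 : IntegrableOn (fun x => Real.exp (-x) * x ^ (s-1)) (Ioi (0:ℝ)) :=
    Real.GammaIntegral_convergent hs
  have h1 : IntegrableOn (fun x => Real.exp (-(a*x)) * (a*x) ^ (s-1)) (Ioi (0:ℝ)) := by
    have := (integrableOn_Ioi_comp_mul_left_iff (fun x => Real.exp (-x) * x ^ (s-1)) 0 ha).2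
    rw [mul_zero] at this
    exact this h0
  have h2 := h1.const_mul ((a:ℝ) ^ (s-1))⁻¹
  apply IntegrableOn.congr_fun h2 _ measurableSet_Ioi
  intro u hu
  simp only
  rw [Real.mul_rpow ha.le (le_of_lt hu)]
  have ha1 : (a:ℝ) ^ (s-1) ≠ 0 := by positivity
  field_simp

lemma ae_ne_zero : ∀ᵐ (x : ℝ) ∂(volume : Measure ℝ), x ≠ 0 := by
  rw [ae_iff]
  simp only [not_not]
  have : {x : ℝ | x = 0} = {0} := by ext y; simp
  rw [this]
  exact measure_singleton 0

lemma gauss_inner (u l : ℝ) (hu : 0 < u) (hl : 0 ≤ l) :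
    ∫ x : ℝ, Real.exp (-(u*l^2)/x^2) * gaussianPDFReal 0 1 x
      = Real.exp (-(l * Real.sqrt (2*u))) := by
  rcases eq_or_lt_of_le hl with hl0 | hl0
  · simp [← hl0, integral_gaussianPDFReal_eq_one 0 one_ne_zero]
  · set b := l * Real.sqrt (2*u) with hbdef
    have hb : 0 < b := mul_pos hl0 (Real.sqrt_pos.2 (by linarith))
    have hb2 : b^2 = 2*u*l^2 := by
      rw [hbdef, mul_pow, Real.sq_sqrt (by linarith : (0:ℝ) ≤ 2*u)]
      ring
    have hphi : ∀ x : ℝ, gaussianPDFReal 0 1 x = (Real.sqrt (2*π))⁻¹ * Real.exp (-x^2/2) := by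
      intro x
      unfold gaussianPDFReal
      norm_num
    have hpt : ∀ x : ℝ, Real.exp (-(u*l^2)/x^2) * gaussianPDFReal 0 1 x
        = (Real.sqrt (2*π))⁻¹ * gl b x := by
      intro x
      have hexp : -x^2/2 - b^2/(2*x^2) = -(u*l^2)/x^2 + (-x^2/2) := by
        rcases eq_or_ne x 0 with hx | hx
        · simp [hx]
        · have hx2 : x^2 ≠ 0 := pow_ne_zero 2 hx
          rw [hb2]
          field_simp
          ring
      rw [hphi x]
      unfold gl
      rw [hexp, Real.exp_add]
      ring
    simp_rw [hpt]
    rw [integral_const_mul]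
    have heven : ∫ x : ℝ, gl b x = ∫ x : ℝ, gl b |x| := by
      congr 1
      funext x
      unfold gl
      rw [sq_abs]
    rw [heven, integral_comp_abs, glasser b hb]
    have h2pi : (0:ℝ) < Real.sqrt (2*π) := Real.sqrt_pos.2 (by positivity)
    field_simp

lemma sq_half_image : (fun t : ℝ => t^2/2) '' (Ioi 0) = Ioi 0 := by
  ext y
  constructor
  · rintro ⟨t, ht, rfl⟩
    simp only [mem_Ioi] at ht ⊢
    positivity
  · intro hy
    simp only [mem_Ioi] at hy
    refine ⟨Real.sqrt (2*y), Real.sqrt_pos.2 (by linarith), ?_⟩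
    show Real.sqrt (2*y) ^ 2 / 2 = y
    rw [Real.sq_sqrt (by linarith : (0:ℝ) ≤ 2*y)]
    ring

lemma sq_half_deriv {t : ℝ} (ht : t ∈ Ioi (0:ℝ)) :
    HasDerivWithinAt (fun t : ℝ => t^2/2) t (Ioi 0) t := by
  have h := ((hasDerivAt_pow 2 t).div_const 2).hasDerivWithinAt (s := Ioi (0:ℝ))
  simpa using h

lemma sq_half_inj : InjOn (fun t : ℝ => t^2/2) (Ioi 0) := by
  intro x hx y hy h
  simp only [mem_Ioi] at hx hy
  simp only at h
  nlinarith

lemma subst_lemma (q l : ℝ) (hq : 0 < q) :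
    ∫ u in Ioi (0:ℝ), u ^ (q-1) * Real.exp (-u - l * Real.sqrt (2*u))
      = (2:ℝ) ^ (1-q) * ∫ t in Ioi (0:ℝ), t ^ (2*q-1) * Real.exp (-t^2/2 - l*t) := by
  have h := integral_image_eq_integral_abs_deriv_smul measurableSet_Ioi
    (fun t ht => sq_half_deriv ht) sq_half_inj
    (fun u => u ^ (q-1) * Real.exp (-u - l * Real.sqrt (2*u)))
  rw [sq_half_image] at h
  rw [h]
  rw [← integral_const_mul]
  apply setIntegral_congr_fun measurableSet_Ioi
  intro t ht
  simp only [mem_Ioi] at ht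
  have ht2 : (0:ℝ) ≤ t := ht.le
  have h1 : Real.sqrt (2*(t^2/2)) = t := by
    rw [show 2*(t^2/2) = t^2 by ring, Real.sqrt_sq ht2]
  have h2 : (t^2/2 : ℝ) ^ (q-1) = 2 ^ (1-q) * t ^ (2*q-2) := by
    rw [div_rpow (by positivity) (by norm_num : (0:ℝ) ≤ 2)]
    rw [← Real.rpow_natCast t 2, ← Real.rpow_mul ht2]
    rw [show (1:ℝ) - q = -(q-1) by ring, Real.rpow_neg (by norm_num : (0:ℝ) ≤ 2)]
    rw [div_eq_mul_inv]
    ring_nf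
  simp only [smul_eq_mul]
  rw [h1, h2, abs_of_pos ht]
  have h3 : t * t ^ (2*q-2) = t ^ (2*q-1) := by
    nth_rewrite 1 [← Real.rpow_one t]
    rw [← Real.rpow_add ht, show (1:ℝ)+(2*q-2) = 2*q-1 by ring]
  calc t * (2 ^ (1-q) * t ^ (2*q-2) * Real.exp (-(t^2/2) - l*t))
      = 2 ^ (1-q) * ((t * t ^ (2*q-2)) * Real.exp (-(t^2/2) - l*t)) := by ring
    _ = 2 ^ (1-q) * (t ^ (2*q-1) * Real.exp (-t^2/2 - l*t)) := by
        rw [h3, neg_div]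

lemma step2 (q l : ℝ) (hq : 0 < q) {x : ℝ} (hx : x ≠ 0) :
    gaussianPDFReal 0 1 x * (x^2/(l^2+x^2)) ^ q
      = ∫ u in Ioi (0:ℝ), ((Real.Gamma q)⁻¹ * (u ^ (q-1) * Real.exp (-u))) *
          (Real.exp (-(u*l^2)/x^2) * gaussianPDFReal 0 1 x) := by
  have hΓ : 0 < Real.Gamma q := Real.Gamma_pos_of_pos hq
  have hx2 : (0:ℝ) < x^2 := by positivity
  have hlx : (0:ℝ) < l^2 + x^2 := by positivity
  have ha : (0:ℝ) < 1 + l^2/x^2 := by positivity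
  have hbase : x^2/(l^2+x^2) = (1 + l^2/x^2)⁻¹ := by
    have h1 : (1 + l^2/x^2) = (l^2+x^2)/x^2 := by field_simp; ring
    rw [h1, inv_div]
  have hsplit : ∀ u : ℝ,
      ((Real.Gamma q)⁻¹ * (u ^ (q-1) * Real.exp (-u))) *
        (Real.exp (-(u*l^2)/x^2) * gaussianPDFReal 0 1 x)
      = ((Real.Gamma q)⁻¹ * gaussianPDFReal 0 1 x) *
        (u ^ (q-1) * Real.exp (-((1 + l^2/x^2)*u))) := by
    intro u
    rw [show -((1 + l^2/x^2)*u) = -u + -(u*l^2)/x^2 by field_simp; ring, Real.exp_add]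
    ring
  simp_rw [hsplit]
  rw [integral_const_mul, gamma_scaled q _ hq ha, hbase,
    Real.inv_rpow ha.le]
  field_simp

noncomputable def FF (q l : ℝ) (x u : ℝ) : ℝ :=
  ((Real.Gamma q)⁻¹ * (u ^ (q-1) * Real.exp (-u))) *
    (Real.exp (-(u*l^2)/x^2) * gaussianPDFReal 0 1 x)

lemma FF_nonneg (q l x u : ℝ) (hq : 0 < q) (hu : 0 ≤ u) : 0 ≤ FF q l x u := by
  unfold FF
  have h1 : 0 ≤ u ^ (q-1) := Real.rpow_nonneg hu _
  have h2 := gaussianPDFReal_nonneg 0 1 x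
  have h3 : 0 ≤ (Real.Gamma q)⁻¹ := (inv_pos.2 (Real.Gamma_pos_of_pos hq)).le
  positivity

lemma FF_le (q l x u : ℝ) (hq : 0 < q) (hu : 0 ≤ u) :
    FF q l x u ≤ ((Real.Gamma q)⁻¹ * gaussianPDFReal 0 1 x) * (u ^ (q-1) * Real.exp (-(1*u))) := by
  unfold FF
  have h1 : 0 ≤ u ^ (q-1) := Real.rpow_nonneg hu _
  have h2 := gaussianPDFReal_nonneg 0 1 x
  have hΓ : 0 < (Real.Gamma q)⁻¹ := inv_pos.2 (Real.Gamma_pos_of_pos hq)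
  have hE : Real.exp (-(u*l^2)/x^2) ≤ 1 := by
    rw [Real.exp_le_one_iff]
    have : 0 ≤ (u*l^2)/x^2 := div_nonneg (mul_nonneg hu (sq_nonneg l)) (sq_nonneg x)
    rw [neg_div]
    linarith
  have key : Real.exp (-(u*l^2)/x^2) * gaussianPDFReal 0 1 x ≤ gaussianPDFReal 0 1 x := by
    nlinarith
  rw [one_mul]
  nlinarith [Real.exp_nonneg (-u), mul_nonneg (mul_nonneg hΓ.le h1) (Real.exp_nonneg (-u))]

lemma FF_meas (q l : ℝ) : Measurable (Function.uncurry (FF q l)) := by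
  unfold FF Function.uncurry gaussianPDFReal
  fun_prop

lemma FF_integrable (q l : ℝ) (hq : 0 < q) :
    Integrable (Function.uncurry (FF q l))
      ((volume : Measure ℝ).prod ((volume : Measure ℝ).restrict (Ioi 0))) := by
  have hΓ : 0 < Real.Gamma q := Real.Gamma_pos_of_pos hq
  have hmeas := (FF_meas q l).aestronglyMeasurable
    (μ := (volume : Measure ℝ).prod ((volume : Measure ℝ).restrict (Ioi 0)))
  rw [integrable_prod_iff hmeas]
  constructor
  · refine ae_of_all _ (fun x => ?_)
    apply Integrable.mono'
      ((gamma_integrable q 1 hq one_pos).const_mul ((Real.Gamma q)⁻¹ * gaussianPDFReal 0 1 x))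
    · exact ((FF_meas q l).comp (measurable_prodMk_left)).aestronglyMeasurable
    · filter_upwards [self_mem_ae_restrict measurableSet_Ioi] with u hu
      have hu' : 0 < u := hu
      simp only [Function.uncurry_apply_pair]
      rw [Real.norm_eq_abs, abs_of_nonneg (FF_nonneg q l x u hq hu'.le)]
      exact FF_le q l x u hq hu'.le
  · apply Integrable.mono' (((integrable_gaussianPDFReal 0 1).const_mul
      ((Real.Gamma q)⁻¹ * Real.Gamma q)))
    · exact hmeas.norm.integral_prod_right'
    · refine ae_of_all _ (fun x => ?_)
      simp only [Function.uncurry_apply_pair]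
      have hnn : 0 ≤ ∫ u in Ioi (0:ℝ), ‖FF q l x u‖ :=
        integral_nonneg (fun u => norm_nonneg _)
      rw [Real.norm_eq_abs, abs_of_nonneg hnn]
      have hle : ∫ u in Ioi (0:ℝ), ‖FF q l x u‖
          ≤ ∫ u in Ioi (0:ℝ), ((Real.Gamma q)⁻¹ * gaussianPDFReal 0 1 x) *
              (u ^ (q-1) * Real.exp (-(1*u))) := by
        apply integral_mono_of_nonneg
        · exact ae_of_all _ (fun u => norm_nonneg _)
        · exact (gamma_integrable q 1 hq one_pos).const_mul _
        · filter_upwards [self_mem_ae_restrict measurableSet_Ioi] with u hu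
          have hu' : 0 < u := hu
          rw [Real.norm_eq_abs, abs_of_nonneg (FF_nonneg q l x u hq hu'.le)]
          exact FF_le q l x u hq hu'.le
      calc ∫ u in Ioi (0:ℝ), ‖FF q l x u‖
          ≤ ∫ u in Ioi (0:ℝ), ((Real.Gamma q)⁻¹ * gaussianPDFReal 0 1 x) *
              (u ^ (q-1) * Real.exp (-(1*u))) := hle
        _ = (Real.Gamma q)⁻¹ * Real.Gamma q * gaussianPDFReal 0 1 x := by
            rw [integral_const_mul, gamma_scaled q 1 hq one_pos]
            rw [Real.one_rpow, div_one]
            ring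

theorem gaussian_moment_eq_hermite (q l : ℝ) (hq : 0 < q) (hl : 0 ≤ l) :
    (∫ x : ℝ, (x ^ 2 / (l ^ 2 + x ^ 2)) ^ q ∂(gaussianReal 0 1))
      = (2 ^ q * Real.Gamma (q + 1 / 2) / Real.Gamma (1 / 2)) *
          ((1 / Real.Gamma (2 * q)) *
            ∫ t in Set.Ioi (0 : ℝ), t ^ (2 * q - 1) * Real.exp (-t ^ 2 / 2 - l * t)) := by
  have hΓ : 0 < Real.Gamma q := Real.Gamma_pos_of_pos hq
  have h1 : (∫ x : ℝ, (x ^ 2 / (l ^ 2 + x ^ 2)) ^ q ∂(gaussianReal 0 1))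
      = ∫ x : ℝ, gaussianPDFReal 0 1 x * (x ^ 2 / (l ^ 2 + x ^ 2)) ^ q := by
    rw [gaussianReal_of_var_ne_zero 0 one_ne_zero, gaussianPDF_def]
    rw [show (fun x => ENNReal.ofReal (gaussianPDFReal 0 1 x))
        = fun x => ((gaussianPDFReal 0 1 x).toNNReal : ℝ≥0∞) from rfl]
    rw [integral_withDensity_eq_integral_smul ((measurable_gaussianPDFReal 0 1).real_toNNReal)]
    congr 1
    funext x
    rw [NNReal.smul_def, smul_eq_mul, Real.coe_toNNReal _ (gaussianPDFReal_nonneg 0 1 x)]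
  have h3 : ∫ x : ℝ, gaussianPDFReal 0 1 x * (x ^ 2 / (l ^ 2 + x ^ 2)) ^ q
      = ∫ x : ℝ, ∫ u in Ioi (0:ℝ), FF q l x u := by
    apply integral_congr_ae
    filter_upwards [ae_ne_zero] with x hx
    exact step2 q l hq hx
  have h4 := integral_integral_swap (FF_integrable q l hq)
  have h5 : ∫ u in Ioi (0:ℝ), ∫ x : ℝ, FF q l x u
      = ∫ u in Ioi (0:ℝ), (Real.Gamma q)⁻¹ * (u ^ (q-1) * Real.exp (-u - l * Real.sqrt (2*u))) := by
    apply setIntegral_congr_fun measurableSet_Ioi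
    intro u hu
    have hu' : 0 < u := hu
    simp only [FF]
    rw [integral_const_mul, gauss_inner u l hu' hl,
      show -u - l * Real.sqrt (2*u) = -u + -(l * Real.sqrt (2*u)) by ring, Real.exp_add]
    ring
  rw [h1, h3, h4, h5, integral_const_mul, subst_lemma q l hq]
  have hconst : (Real.Gamma q)⁻¹ * (2:ℝ)^(1-q)
      = 2 ^ q * Real.Gamma (q + 1/2) / Real.Gamma (1/2) * (1/Real.Gamma (2*q)) := by
    have hdup := Real.Gamma_mul_Gamma_add_half q
    have h2q : 0 < Real.Gamma (2*q) := Real.Gamma_pos_of_pos (by linarith)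
    have hπ : 0 < Real.sqrt π := Real.sqrt_pos.2 pi_pos
    have hpow : (2:ℝ)^q * 2^(1-2*q) = 2^(1-q) := by
      rw [← Real.rpow_add two_pos]
      ring_nf
    have e1 : Real.Gamma (q+1/2) = Real.Gamma (2*q) * 2^(1-2*q) * Real.sqrt π / Real.Gamma q := by
      rw [eq_div_iff (ne_of_gt hΓ)]
      linarith [hdup]
    rw [Real.Gamma_one_half_eq, e1, ← hpow]
    field_simp
  rw [← mul_assoc, hconst, mul_assoc]
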